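/- For every trace t, if t satisfies the security property then apv(t) is empty; conversely (assuming r is reflexive and corruption sets are finite), if apv(t) is empty then t satisfies the security property. In other words, apv(t) = ∅ if and only if sat t. -/
import Mathlib

theorem stmt1 {T P : Type*} (sat : T → Prop) (cor : T → Finset P)
    (r : T → T → Prop) (hrefl : ∀ t, r t t)
    (apv : T → Set (Finset P))
    (happv : ∀ t, apv t = {S | ¬ sat t ∧ (∃ t', r t t' ∧ cor t' = S ∧ ¬ sat t') ∧
      ¬ ∃ t'', r t t'' ∧ cor t'' ⊂ S ∧ ¬ sat t''})
    (t : T) : apv t = ∅ ↔ sat t := by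
  rw [happv]
  constructor
  · intro h
    by_contra hns
    set s : Set (Finset P) := {S | ∃ t', r t t' ∧ cor t' = S ∧ ¬ sat t'} with hs
    have hne : s.Nonempty := ⟨cor t, t, hrefl t, rfl, hns⟩
    obtain ⟨S, hS, hmin⟩ := (wellFounded_lt (α := Finset P)).has_min s hne
    have : S ∈ ({S | ¬ sat t ∧ (∃ t', r t t' ∧ cor t' = S ∧ ¬ sat t') ∧
        ¬ ∃ t'', r t t'' ∧ cor t'' ⊂ S ∧ ¬ sat t''} : Set (Finset P)) := by
      refine ⟨hns, hS, ?_⟩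
      rintro ⟨t'', hr, hsub, hns''⟩
      exact hmin (cor t'') ⟨t'', hr, rfl, hns''⟩ hsub
    rw [h] at this
    exact this
  · intro hsat
    ext S
    simp [hsat]
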